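/- Let h : ℤ → ℝ be Altshuller multiplier data with period T > 0 (hₙ ≥ 0, h₀ = 0, summable, Σ_{n∈ℤ} hₙ < 1) and let M(ω) = 1 − Σ_{n∈ℤ} hₙ e^{−iωnT}. Then for all positive integers a and b with b > 1, the principal argument of M at the frequency ω = (a/b)(2π/T) satisfies |arg M((a/b)(2π/T))| ≤ (π/2)(1 − 2/b). Equivalently, writing z = 1 − Σ_{n∈ℤ} hₙ exp(−2πi·a·n/b), one has z ≠ 0 and |arg z| ≤ (π/2)(1 − 2/b). -/

import Mathlib

open Complex Real

lemma aux_sin_prod (b : ℕ) (hb : 0 < b) (j : ℤ) :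
    0 ≤ Real.sin (((j:ℝ)+1)*π/b) * Real.sin ((j:ℝ)*π/b) := by
  have hbz : (0:ℤ) < b := by exact_mod_cast hb
  have hbR : (0:ℝ) < b := by exact_mod_cast hb
  set m := j / (b:ℤ) with hm
  set r := j % (b:ℤ) with hr
  have hr0 : (0:ℤ) ≤ r := Int.emod_nonneg j (ne_of_gt hbz)
  have hrb : r < b := Int.emod_lt_of_pos j hbz
  have hj : j = b * m + r := by rw [hm, hr]; exact (Int.mul_ediv_add_emod j b).symm
  have e1 : (j:ℝ)*π/b = (r:ℝ)*π/b + m*π := by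
    have : (j:ℝ) = (b:ℝ)*(m:ℝ) + (r:ℝ) := by exact_mod_cast congrArg (Int.cast : ℤ → ℝ) hj
    rw [this]; field_simp; ring
  have e2 : ((j:ℝ)+1)*π/b = ((r:ℝ)+1)*π/b + m*π := by
    have : (j:ℝ) = (b:ℝ)*(m:ℝ) + (r:ℝ) := by exact_mod_cast congrArg (Int.cast : ℤ → ℝ) hj
    rw [this]; field_simp; ring
  rw [e1, e2, Real.sin_add_int_mul_pi, Real.sin_add_int_mul_pi]
  have hr0R : (0:ℝ) ≤ (r:ℝ) := by exact_mod_cast hr0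
  have hrbR : (r:ℝ) + 1 ≤ (b:ℝ) := by exact_mod_cast hrb
  have s1 : 0 ≤ Real.sin ((r:ℝ)*π/b) := by
    apply Real.sin_nonneg_of_nonneg_of_le_pi
    · positivity
    · rw [div_le_iff₀ hbR]; nlinarith [Real.pi_pos]
  have s2 : 0 ≤ Real.sin (((r:ℝ)+1)*π/b) := by
    apply Real.sin_nonneg_of_nonneg_of_le_pi
    · positivity
    · rw [div_le_iff₀ hbR]; nlinarith [Real.pi_pos]
  have hm1 : ((-1:ℝ)^m) * ((-1:ℝ)^m) = 1 := by
    rw [← mul_zpow]; norm_num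
  nlinarith [mul_nonneg s2 s1]

lemma aux_cos_odd (b : ℕ) (hb : 0 < b) (j : ℤ) :
    Real.cos ((2*(j:ℝ)+1)*π/b) ≤ Real.cos (π/b) := by
  have hbR : (0:ℝ) < b := by exact_mod_cast hb
  have h1 : ((2*(j:ℝ)+1)*π/b + π/b)/2 = ((j:ℝ)+1)*π/b := by field_simp; ring
  have h2 : ((2*(j:ℝ)+1)*π/b - π/b)/2 = (j:ℝ)*π/b := by field_simp; ring
  have e := Real.cos_sub_cos ((2*(j:ℝ)+1)*π/b) (π/b)
  rw [h1, h2] at e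
  nlinarith [aux_sin_prod b hb j]


/-- Altshuller multiplier data: a summable family `h : ℤ → ℝ` with `hₙ ≥ 0`,
`h₀ = 0` and `Σₙ hₙ < 1`. -/
def AltshullerData (h : ℤ → ℝ) : Prop :=
  Summable h ∧ (∀ n : ℤ, 0 ≤ h n) ∧ h 0 = 0 ∧ ∑' n : ℤ, h n < 1

/-- The frequency response of an Altshuller multiplier with period `T`:
`M(ω) = 1 − Σₙ hₙ e^{−iωnT}`. -/
noncomputable def altFreq (h : ℤ → ℝ) (T ω : ℝ) : ℂ :=
  1 - ∑' n : ℤ, (h n : ℂ) * Complex.exp (-(Complex.I * ω * n * T))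

/-- Phase limitation of Altshuller multipliers: at the rational frequency
`ω = (a/b)(2π/T)` (with `a, b` positive integers, `b > 1`), the frequency response is
nonzero and its principal argument satisfies `|arg M(ω)| ≤ (π/2)(1 − 2/b)`. -/
theorem altshuller_phase_limitation (h : ℤ → ℝ) (hAlt : AltshullerData h)
    (T : ℝ) (hT : 0 < T) (a b : ℕ) (ha : 0 < a) (hb : 1 < b) :
    altFreq h T ((a / b) * (2 * π / T)) ≠ 0 ∧
    |Complex.arg (altFreq h T ((a / b) * (2 * π / T)))| ≤ (π / 2) * (1 - 2 / b) := by
  obtain ⟨hsum, hpos, h0, hlt⟩ := hAlt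
  set ω : ℝ := ((a:ℝ) / b) * (2 * π / T) with hωdef
  set z : ℂ := altFreq h T ω with hzdef
  have hb1R : (1:ℝ) < b := by exact_mod_cast hb
  have hbR : (0:ℝ) < b := by linarith
  have h2b : (2:ℝ) ≤ b := by exact_mod_cast hb
  have hTne : T ≠ 0 := ne_of_gt hT
  have hφ : ∀ n : ℤ, ω * n * T = 2 * π * a * n / b := by
    intro n; rw [hωdef]; field_simp
  set s : ℝ := ∑' n : ℤ, h n with hsdef
  have hs0 : 0 ≤ s := tsum_nonneg hpos
  -- summability of complex exponential families
  have hnorm : ∀ (x : ℤ → ℝ), Summable (fun n : ℤ => (h n:ℂ) * Complex.exp ((x n : ℝ) * I)) := by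
    intro x
    apply Summable.of_norm
    have heq : ∀ n : ℤ, ‖(h n:ℂ) * Complex.exp ((x n:ℝ) * I)‖ = h n := by
      intro n
      rw [norm_mul, Complex.norm_real, Real.norm_eq_abs,
        Complex.norm_exp_ofReal_mul_I, mul_one, _root_.abs_of_nonneg (hpos n)]
    simpa only [heq] using hsum
  -- key estimate
  have key : ∀ θ : ℝ, (∀ n : ℤ, Real.cos (θ - ω*n*T) ≤ Real.cos θ) →
      Real.cos θ * (1 - s) ≤ (Complex.exp ((θ:ℝ) * I) * z).re := by
    intro θ hθ
    have hW : Complex.exp ((θ:ℝ)*I) * z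
        = Complex.exp ((θ:ℝ)*I) - ∑' n : ℤ, (h n:ℂ) * Complex.exp ((((θ - ω*n*T : ℝ)):ℂ) * I) := by
      rw [hzdef, altFreq, mul_sub, mul_one]
      congr 1
      rw [← tsum_mul_left]
      apply tsum_congr
      intro n
      rw [mul_left_comm, ← Complex.exp_add]
      congr 1
      push_cast
      ring
    rw [hW, Complex.sub_re, Complex.exp_ofReal_mul_I_re, Complex.re_tsum (hnorm _)]
    have hre : ∀ n : ℤ, ((h n:ℂ) * Complex.exp ((((θ - ω*n*T : ℝ)):ℂ) * I)).re
        = h n * Real.cos (θ - ω*n*T) := by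
      intro n
      rw [Complex.mul_re, Complex.ofReal_re, Complex.ofReal_im,
        Complex.exp_ofReal_mul_I_re]
      simp
    simp only [hre]
    have hsumL : Summable (fun n : ℤ => h n * Real.cos (θ - ω*n*T)) := by
      apply Summable.of_norm_bounded hsum
      intro n
      rw [Real.norm_eq_abs, abs_mul, _root_.abs_of_nonneg (hpos n)]
      calc h n * |Real.cos (θ - ω*n*T)| ≤ h n * 1 :=
            mul_le_mul_of_nonneg_left (Real.abs_cos_le_one _) (hpos n)
        _ = h n := mul_one _
    have hb1 : ∑' n : ℤ, h n * Real.cos (θ - ω*n*T) ≤ ∑' n : ℤ, h n * Real.cos θ :=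
      Summable.tsum_le_tsum (fun n => mul_le_mul_of_nonneg_left (hθ n) (hpos n)) hsumL
        (hsum.mul_right _)
    have heq2 : ∑' n : ℤ, h n * Real.cos θ = s * Real.cos θ := tsum_mul_right
    rw [heq2] at hb1
    nlinarith [hb1]
  -- θ = 0 : positive real part
  have k0 := key 0 (fun n => by rw [Real.cos_zero]; exact Real.cos_le_one _)
  rw [Complex.ofReal_zero, zero_mul, Complex.exp_zero, one_mul, Real.cos_zero, one_mul] at k0
  have hx : 0 < z.re := lt_of_lt_of_le (by linarith) k0
  have hzne : z ≠ 0 := fun hz => by rw [hz, Complex.zero_re] at hx; exact lt_irrefl 0 hx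
  -- c and σ
  set c : ℝ := Real.cos (π/b) with hcdef
  set σ : ℝ := Real.sin (π/b) with hσdef
  have hpb_pos : 0 < π/b := div_pos Real.pi_pos hbR
  have hpb_le : π/(b:ℝ) ≤ π/2 := by
    apply div_le_div_of_nonneg_left Real.pi_pos.le (by norm_num) h2b
  have hc0 : 0 ≤ c := Real.cos_nonneg_of_mem_Icc ⟨by linarith, hpb_le⟩
  have hσ0 : 0 < σ := Real.sin_pos_of_pos_of_lt_pi hpb_pos
    (lt_of_le_of_lt hpb_le (by linarith [Real.pi_pos]))
  -- θ = π/b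
  have kp := key (π/b) (by
    intro n
    rw [hφ n]
    have harg : π/(b:ℝ) - 2*π*a*n/b = (2*((-(a*n) : ℤ):ℝ)+1)*π/b := by push_cast; ring
    rw [harg]
    exact aux_cos_odd b (by omega) _)
  have km := key (-(π/b)) (by
    intro n
    rw [hφ n]
    have e1 : -(π/(b:ℝ)) - 2*π*a*n/b = -((2*(((a*n : ℤ)):ℝ)+1)*π/b) := by push_cast; ring
    rw [e1, Real.cos_neg, Real.cos_neg]
    exact aux_cos_odd b (by omega) _)
  have hre_exp : ∀ θ : ℝ, (Complex.exp ((θ:ℝ)*I) * z).re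
      = Real.cos θ * z.re - Real.sin θ * z.im := by
    intro θ
    rw [Complex.mul_re, Complex.exp_ofReal_mul_I_re, Complex.exp_ofReal_mul_I_im]
  rw [hre_exp] at kp km
  rw [Real.cos_neg, Real.sin_neg] at km
  have h1s : (0:ℝ) ≤ 1 - s := by linarith
  have hcx1 : σ * z.im ≤ c * z.re := by nlinarith [mul_nonneg hc0 h1s]
  have hcx2 : -(c * z.re) ≤ σ * z.im := by nlinarith [mul_nonneg hc0 h1s]
  have habs : |Complex.arg z| < π/2 := Complex.abs_arg_lt_pi_div_two_iff.mpr (Or.inl hx)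
  have harg : Complex.arg z = Real.arctan (z.im / z.re) := by
    have h1 := abs_lt.mp habs
    have h2 := Real.arctan_tan (x := Complex.arg z) (by linarith [h1.1]) h1.2
    rw [Complex.tan_arg] at h2
    exact h2.symm
  have htan : Real.tan (π/2 - π/b) = c/σ := by
    rw [Real.tan_eq_sin_div_cos, Real.sin_pi_div_two_sub, Real.cos_pi_div_two_sub]
  have hkeyA : Real.arctan (c/σ) = π/2 - π/b := by
    rw [← htan]
    exact Real.arctan_tan (by linarith) (by linarith)
  have hgoal2 : (π/2) * (1 - 2/(b:ℝ)) = π/2 - π/b := by field_simp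
  refine ⟨hzne, ?_⟩
  rw [harg, hgoal2, abs_le]
  constructor
  · rw [← hkeyA, ← Real.arctan_neg]
    apply Real.arctan_strictMono.monotone
    rw [neg_le, ← neg_div, div_le_div_iff₀ hx hσ0]
    linarith
  · rw [← hkeyA]
    apply Real.arctan_strictMono.monotone
    rw [div_le_div_iff₀ hx hσ0]
    linarith
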